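/- Let p, q ≥ 2 be coprime integers and let G be the group with presentation ⟨u, v | u^q = v^p⟩. Then the set of trace triples {(tr ρ(u), tr ρ(v), tr ρ(uv)) : ρ a group homomorphism G → SL(2,ℂ)} is equal to the union of the abelian part {(t^p + t^{−p}, t^q + t^{−q}, t^{p+q} + t^{−(p+q)}) : t ∈ ℂ, t ≠ 0} and the irreducible part ⋃_{(k,l) ∈ 𝒜} {(2cos(kπ/q), 2cos(lπ/p), z) : z ∈ ℂ}, where 𝒜 is the set of pairs of integers (k,l) with 1 ≤ k ≤ q−1, 1 ≤ l ≤ p−1 and k ≡ l (mod 2). -/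

import Mathlib

/-- The single relator `u^q · v^{-p}` of the torus knot group `⟨u, v | u^q = v^p⟩`,
where `u = FreeGroup.of 0` and `v = FreeGroup.of 1`. -/
def torusRels (p q : ℕ) : Set (FreeGroup (Fin 2)) :=
  {FreeGroup.of 0 ^ q * (FreeGroup.of 1 ^ p)⁻¹}



open Matrix
noncomputable section
namespace TK

abbrev M2 := Matrix (Fin 2) (Fin 2) ℂ
abbrev SL2 := Matrix.SpecialLinearGroup (Fin 2) ℂ

/-- Cayley–Hamilton for 2×2 det-1 matrices. -/
lemma sq_eq (A : M2) (hA : A.det = 1) : A * A = A.trace • A - 1 := by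
  rw [Matrix.det_fin_two] at hA
  ext i j
  fin_cases i <;> fin_cases j <;>
    simp [Matrix.mul_apply, Fin.sum_univ_two, Matrix.trace_fin_two, Matrix.one_apply,
      Matrix.smul_apply] <;>
    first | ring1 | linear_combination -hA

/-- Chebyshev-like power formula for 2×2 det-1 matrices. -/
lemma pow_formula (A : M2) (hA : A.det = 1) (β : ℂ) (hβ0 : β ≠ 0)
    (hτ : A.trace = β + β⁻¹) (n : ℕ) :
    (β - β⁻¹) • A ^ (n + 1) = (β ^ (n+1) - β⁻¹ ^ (n+1)) • A - (β ^ n - β⁻¹ ^ n) • (1 : M2) := by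
  have hinv : β * β⁻¹ = 1 := mul_inv_cancel₀ hβ0
  induction n with
  | zero => simp
  | succ n ih =>
    have h2 : A ^ (n + 1 + 1) = A ^ (n + 1) * A := by rw [pow_succ]
    have h3 := congrArg (· * A) ih
    simp only [smul_mul_assoc, sub_mul, one_mul, ← h2] at h3
    rw [h3, sq_eq A hA, hτ]
    ext i j
    simp only [Matrix.sub_apply, Matrix.smul_apply, Matrix.mul_apply, smul_eq_mul]
    linear_combination (β ^ n - β⁻¹ ^ n) * A i j * hinv

lemma pow_eq_scalar (A : M2) (hA : A.det = 1) (β ε : ℂ) (hβ0 : β ≠ 0) (hne : β - β⁻¹ ≠ 0)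
    (hτ : A.trace = β + β⁻¹) {m : ℕ} (hm : 1 ≤ m) (hβm : β ^ m = ε) (hε : ε * ε = 1) :
    A ^ m = ε • (1 : M2) := by
  have hinv : β * β⁻¹ = 1 := mul_inv_cancel₀ hβ0
  obtain ⟨n, rfl⟩ : ∃ n, m = n + 1 := ⟨m - 1, by omega⟩
  have hf := pow_formula A hA β hβ0 hτ n
  have h1 : β ^ (n+1) * β⁻¹ ^ (n+1) = 1 := by rw [← mul_pow, hinv, one_pow]
  rw [hβm] at h1
  have hβinv : β⁻¹ ^ (n+1) = ε := by linear_combination ε * h1 - β⁻¹ ^ (n+1) * hε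
  have hβn : β ^ n = ε * β⁻¹ := by linear_combination β⁻¹ * hβm - β ^ n * hinv
  have hβinvn : β⁻¹ ^ n = ε * β := by linear_combination β * hβinv - β⁻¹ ^ n * hinv
  rw [hβm, hβinv, hβn, hβinvn] at hf
  have h4 : (β - β⁻¹) • A ^ (n+1) = (β - β⁻¹) • (ε • (1:M2)) := by
    rw [hf]; ext i j
    simp only [Matrix.sub_apply, Matrix.smul_apply, smul_eq_mul, Matrix.one_apply]
    ring
  exact smul_right_injective _ hne h4

end TK

namespace TK
open Matrix

lemma det_sub_smul (A : M2) (α : ℂ) :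
    (A - α • 1).det = α * α - A.trace * α + A.det := by
  simp [Matrix.det_fin_two, Matrix.trace_fin_two, Matrix.one_apply]
  ring

lemma eigen_quad {A : M2} (hA : A.det = 1) {α : ℂ} {v : Fin 2 → ℂ} (hv : v ≠ 0)
    (h : A.mulVec v = α • v) : α * α - A.trace * α + 1 = 0 := by
  have h0 : (A - α • 1).mulVec v = 0 := by
    rw [Matrix.sub_mulVec, Matrix.smul_mulVec, Matrix.one_mulVec, h, sub_self]
  have hdet : (A - α • 1).det = 0 := by
    rw [← Matrix.exists_mulVec_eq_zero_iff]
    exact ⟨v, hv, h0⟩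
  rw [det_sub_smul, hA] at hdet
  exact hdet

lemma eigen_ne_zero {A : M2} (hA : A.det = 1) {α : ℂ} {v : Fin 2 → ℂ} (hv : v ≠ 0)
    (h : A.mulVec v = α • v) : α ≠ 0 := by
  have hq := eigen_quad hA hv h
  rintro rfl; simp at hq

lemma eigen_trace {A : M2} (hA : A.det = 1) {α : ℂ} {v : Fin 2 → ℂ} (hv : v ≠ 0)
    (h : A.mulVec v = α • v) : A.trace = α + α⁻¹ := by
  have hq := eigen_quad hA hv h
  have h0 : α ≠ 0 := eigen_ne_zero hA hv h
  have hinv : α * α⁻¹ = 1 := mul_inv_cancel₀ h0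
  field_simp
  linear_combination -hq

lemma exists_eigen (A : M2) (hA : A.det = 1) :
    ∃ (α : ℂ) (v : Fin 2 → ℂ), v ≠ 0 ∧ A.mulVec v = α • v := by
  obtain ⟨d, hd⟩ := Complex.isAlgClosed.exists_pow_nat_eq (A.trace ^ 2 - 4) (by norm_num : 0 < 2)
  set α := (A.trace + d) / 2 with hα
  have hdet : (A - α • 1).det = 0 := by
    rw [det_sub_smul, hA, hα]
    linear_combination hd / 4
  obtain ⟨v, hv, h0⟩ := (Matrix.exists_mulVec_eq_zero_iff.mpr hdet)
  refine ⟨α, v, hv, ?_⟩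
  rw [Matrix.sub_mulVec, Matrix.smul_mulVec, Matrix.one_mulVec] at h0
  linear_combination (norm := module) h0

lemma pow_mulVec {A : M2} {α : ℂ} {v : Fin 2 → ℂ} (h : A.mulVec v = α • v) (n : ℕ) :
    (A ^ n).mulVec v = α ^ n • v := by
  induction n with
  | zero => simp
  | succ n ih =>
    rw [pow_succ, ← Matrix.mulVec_mulVec, h, Matrix.mulVec_smul, ih, smul_smul, pow_succ]
    ring_nf

end TK

namespace TK
open Matrix

lemma prop_of_cross {u w : Fin 2 → ℂ} (hw : w ≠ 0) (h : u 0 * w 1 = u 1 * w 0) :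
    ∃ c : ℂ, u = c • w := by
  rcases Function.ne_iff.mp hw with ⟨i, hi⟩
  fin_cases i
  · have hw0 : w 0 ≠ 0 := by simpa using hi
    refine ⟨u 0 / w 0, funext fun j => ?_⟩
    fin_cases j <;> simp only [Fin.mk_zero, Fin.mk_one, Fin.isValue, Pi.smul_apply, smul_eq_mul] <;>
      rw [div_mul_eq_mul_div, eq_div_iff hw0] <;>
      first | ring1 | linear_combination -h | linear_combination h
  · have hw1 : w 1 ≠ 0 := by simpa using hi
    refine ⟨u 1 / w 1, funext fun j => ?_⟩
    fin_cases j <;> simp only [Fin.mk_zero, Fin.mk_one, Fin.isValue, Pi.smul_apply, smul_eq_mul] <;>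
      rw [div_mul_eq_mul_div, eq_div_iff hw1] <;>
      first | ring1 | linear_combination -h | linear_combination h

lemma eq_zero_of_two_kernel (N : M2) {u w : Fin 2 → ℂ} (hu : N.mulVec u = 0)
    (hw : N.mulVec w = 0) (hx : u 0 * w 1 - u 1 * w 0 ≠ 0) : N = 0 := by
  ext i j
  have hui := congrFun hu i
  have hwi := congrFun hw i
  simp only [Matrix.mulVec, dotProduct, Fin.sum_univ_two, Pi.zero_apply] at hui hwi
  have h0 : N i 0 * (u 0 * w 1 - u 1 * w 0) = 0 := by linear_combination w 1 * hui - u 1 * hwi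
  have h1 : N i 1 * (u 0 * w 1 - u 1 * w 0) = 0 := by linear_combination u 0 * hwi - w 0 * hui
  fin_cases j
  · simpa using (mul_eq_zero.mp h0).resolve_right hx
  · simpa using (mul_eq_zero.mp h1).resolve_right hx

/-- If `C` has det 1 and commutes with `A` and `B`, and `A, B` have no common
eigenvector, then `C = ±1`. -/
lemma comm_scalar {A B C : M2} (hdetC : C.det = 1) (hCA : C * A = A * C) (hCB : C * B = B * C)
    (hnce : ¬ ∃ v : Fin 2 → ℂ, v ≠ 0 ∧ (∃ a : ℂ, A.mulVec v = a • v) ∧ (∃ b : ℂ, B.mulVec v = b • v)) :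
    ∃ ε : ℂ, ε * ε = 1 ∧ C = ε • (1 : M2) := by
  obtain ⟨γ, w, hw, hγ⟩ := exists_eigen C hdetC
  set N : M2 := C - γ • 1 with hN
  have hNw : N.mulVec w = 0 := by
    rw [hN, Matrix.sub_mulVec, Matrix.smul_mulVec, Matrix.one_mulVec, hγ, sub_self]
  by_cases h0 : N = 0
  · refine ⟨γ, ?_, ?_⟩
    · have : C = γ • 1 := by rw [← sub_eq_zero]; exact h0
      have hd : (γ • (1 : M2)).det = 1 := this ▸ hdetC
      rw [Matrix.det_smul, Matrix.det_one, mul_one] at hd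
      simpa [pow_two] using (by simpa using hd : γ ^ (2 : ℕ) = 1)
    · rw [← sub_eq_zero]; exact h0
  · exfalso
    apply hnce
    have hNA : N * A = A * N := by
      rw [hN, sub_mul, mul_sub, hCA, smul_mul_assoc, mul_smul_comm, one_mul, mul_one]
    have hNB : N * B = B * N := by
      rw [hN, sub_mul, mul_sub, hCB, smul_mul_assoc, mul_smul_comm, one_mul, mul_one]
    have hAu : N.mulVec (A.mulVec w) = 0 := by
      rw [Matrix.mulVec_mulVec, hNA, ← Matrix.mulVec_mulVec, hNw, Matrix.mulVec_zero]
    have hBu : N.mulVec (B.mulVec w) = 0 := by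
      rw [Matrix.mulVec_mulVec, hNB, ← Matrix.mulVec_mulVec, hNw, Matrix.mulVec_zero]
    refine ⟨w, hw, ?_, ?_⟩
    · rcases eq_or_ne ((A.mulVec w) 0 * w 1 - (A.mulVec w) 1 * w 0) 0 with h | h
      · obtain ⟨c, hc⟩ := prop_of_cross (u := A.mulVec w) hw (by linear_combination h)
        exact ⟨c, hc⟩
      · exact absurd (eq_zero_of_two_kernel N hAu hNw h) h0
    · rcases eq_or_ne ((B.mulVec w) 0 * w 1 - (B.mulVec w) 1 * w 0) 0 with h | h
      · obtain ⟨c, hc⟩ := prop_of_cross (u := B.mulVec w) hw (by linear_combination h)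
        exact ⟨c, hc⟩
      · exact absurd (eq_zero_of_two_kernel N hBu hNw h) h0

end TK

namespace TK
open Matrix Complex

lemma scalar_add_nilp_pow (c : ℂ) (N : M2) (hN : N * N = 0) (n : ℕ) :
    (c • 1 + N) ^ (n + 1) = c ^ (n+1) • (1 : M2) + ((n+1 : ℂ) * c ^ n) • N := by
  induction n with
  | zero => simp
  | succ n ih =>
    rw [pow_succ, ih, add_mul, mul_add, mul_add]
    simp only [smul_mul_assoc, mul_smul_comm, one_mul, mul_one, hN, smul_zero, add_zero,
      smul_smul]
    match_scalars <;> push_cast <;> ring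

lemma trace_form {A : M2} (hA : A.det = 1) {q : ℕ} (hq : 2 ≤ q) {ε : ℂ} (hε : ε * ε = 1)
    (hpow : A ^ q = ε • 1) (hsc : ∀ c : ℂ, A ≠ c • 1) :
    ∃ k : ℕ, 1 ≤ k ∧ k ≤ q - 1 ∧ A.trace = ((2 * Real.cos (k * Real.pi / q) : ℝ) : ℂ) ∧
      ((-1 : ℂ)) ^ k = ε := by
  have hq0 : (q : ℂ) ≠ 0 := Nat.cast_ne_zero.mpr (by omega)
  have hq0' : (q : ℝ) ≠ 0 := Nat.cast_ne_zero.mpr (by omega)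
  obtain ⟨α, v, hv, hav⟩ := exists_eigen A hA
  have hα0 : α ≠ 0 := eigen_ne_zero hA hv hav
  have hτ : A.trace = α + α⁻¹ := eigen_trace hA hv hav
  have hαq : α ^ q = ε := by
    have h1 := pow_mulVec hav q
    rw [hpow, Matrix.smul_mulVec, Matrix.one_mulVec] at h1
    obtain ⟨i, hi⟩ := Function.ne_iff.mp hv
    have h2 := congrFun h1 i
    simp only [Pi.smul_apply, smul_eq_mul, Pi.zero_apply] at h2 hi
    exact (mul_right_cancel₀ hi h2).symm
  -- α is not ±1
  have hα2 : α * α ≠ 1 := by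
    intro hsq
    have hinv : α⁻¹ = α := by
      field_simp
      linear_combination -hsq
    have hτ2 : A.trace = 2 * α := by rw [hτ, hinv]; ring
    set N : M2 := A - α • 1 with hNdef
    have hNne : N ≠ 0 := fun h => hsc α (by rwa [← sub_eq_zero])
    have hN2 : N * N = 0 := by
      have e1 : N * N = (A.trace - 2*α) • A + (α*α - 1) • (1 : M2) := by
        have h2 := sq_eq A hA
        simp only [hNdef, sub_mul, mul_sub, smul_mul_assoc, mul_smul_comm, one_mul, mul_one, h2]
        module
      rw [e1, hτ2, hsq]
      simp
    obtain ⟨n, rfl⟩ : ∃ n, q = n + 1 := ⟨q - 1, by omega⟩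
    have hAeq : α • 1 + N = A := by rw [hNdef]; module
    have h3 := scalar_add_nilp_pow α N hN2 n
    rw [hAeq, hpow, hαq] at h3
    have h4 : ((n+1 : ℂ) * α ^ n) • N = 0 := by
      have := congrArg (· - ε • (1:M2)) h3
      simpa [add_sub_cancel_left] using this.symm
    rcases smul_eq_zero.mp h4 with h5 | h5
    · have : ((n : ℂ) + 1) * α ^ n ≠ 0 :=
        mul_ne_zero (Nat.cast_add_one_ne_zero n) (pow_ne_zero _ hα0)
      exact absurd h5 this
    · exact hNne h5
  have hα2q : α ^ (2 * q) = 1 := by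
    rw [mul_comm, pow_mul, hαq]
    linear_combination hε
  haveI : NeZero (2 * q) := ⟨by omega⟩
  have hprim := Complex.isPrimitiveRoot_exp (2 * q) (by omega)
  obtain ⟨m, hmlt, hm⟩ := hprim.eq_pow_of_pow_eq_one hα2q
  set θ : ℝ := m * Real.pi / q with hθdef
  have hθ : α = Complex.exp ((θ : ℂ) * I) := by
    rw [← hm, ← Complex.exp_nat_mul]
    congr 1
    push_cast [hθdef]
    field_simp
  have hm0 : m ≠ 0 := by
    rintro rfl
    apply hα2
    simp [hθdef] at hθ
    rw [hθ]; simp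
  have hmq : m ≠ q := by
    rintro rfl
    apply hα2
    have : θ = Real.pi := by rw [hθdef]; field_simp
    rw [hθ, this, Complex.exp_pi_mul_I]
    norm_num
  have hτc : A.trace = ((2 * Real.cos θ : ℝ) : ℂ) := by
    rw [hτ, hθ, ← Complex.exp_neg]
    rw [Complex.exp_mul_I]
    rw [show -((θ:ℂ) * I) = (-(θ:ℂ)) * I by ring, Complex.exp_mul_I]
    push_cast [Complex.ofReal_cos]
    rw [Complex.cos_neg, Complex.sin_neg]
    ring
  have hεm : ε = (-1 : ℂ) ^ m := by
    rw [← hαq, hθ, ← Complex.exp_nat_mul]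
    have : (q : ℂ) * ((θ:ℂ) * I) = (m : ℂ) * ((Real.pi : ℂ) * I) := by
      push_cast [hθdef]
      field_simp
    rw [this, show (m:ℂ) * ((Real.pi:ℂ) * I) = (m:ℕ) * ((Real.pi:ℂ) * I) by push_cast; ring,
      Complex.exp_nat_mul, Complex.exp_pi_mul_I]
  rcases Nat.lt_or_ge m q with hmlt' | hmge
  · exact ⟨m, by omega, by omega, by rw [hτc, hθdef], hεm.symm⟩
  · have hmgt : q < m := lt_of_le_of_ne hmge (Ne.symm hmq)
    refine ⟨2 * q - m, by omega, by omega, ?_, ?_⟩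
    · have hcast : ((2 * q - m : ℕ) : ℝ) = 2 * q - m := by
        push_cast [Nat.cast_sub (le_of_lt hmlt)]
        ring
      have harg : ((2 * q - m : ℕ) : ℝ) * Real.pi / q = 2 * Real.pi - θ := by
        rw [hcast, hθdef]; field_simp
      rw [hτc, harg]
      congr 2
      rw [Real.cos_sub]
      simp [Real.cos_two_pi, Real.sin_two_pi]
    · have e1 : (-1 : ℂ) ^ (2 * q - m) * (-1 : ℂ) ^ m = 1 := by
        rw [← pow_add, show 2 * q - m + m = 2 * q by omega, pow_mul]
        norm_num
      have e2 : (-1 : ℂ) ^ m * (-1 : ℂ) ^ m = 1 := by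
        rw [← mul_pow]; norm_num
      rw [hεm]
      linear_combination ((-1:ℂ) ^ m) * e1 - ((-1:ℂ) ^ (2*q - m)) * e2

end TK

namespace TK
open Matrix

lemma abelian_case {A B : M2} (hA : A.det = 1) (hB : B.det = 1) {p q : ℕ}
    (hp : 2 ≤ p) (hq : 2 ≤ q) (hpq : Nat.Coprime p q) (hrel : A ^ q = B ^ p)
    {v : Fin 2 → ℂ} (hv : v ≠ 0) {a b : ℂ} (ha : A.mulVec v = a • v) (hb : B.mulVec v = b • v) :
    ∃ t : ℂ, t ≠ 0 ∧ A.trace = t ^ p + t⁻¹ ^ p ∧ B.trace = t ^ q + t⁻¹ ^ q ∧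
      (A * B).trace = t ^ (p+q) + t⁻¹ ^ (p+q) := by
  have ha0 : a ≠ 0 := eigen_ne_zero hA hv ha
  have hb0 : b ≠ 0 := eigen_ne_zero hB hv hb
  have hτA : A.trace = a + a⁻¹ := eigen_trace hA hv ha
  have hτB : B.trace = b + b⁻¹ := eigen_trace hB hv hb
  have hdAB : (A * B).det = 1 := by rw [Matrix.det_mul, hA, hB, mul_one]
  have hab : (A * B).mulVec v = (a * b) • v := by
    rw [← Matrix.mulVec_mulVec, hb, Matrix.mulVec_smul, ha, smul_smul, mul_comm]
  have hτAB : (A * B).trace = a * b + (a * b)⁻¹ := eigen_trace hdAB hv hab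
  -- a ^ q = b ^ p
  have haq : a ^ q = b ^ p := by
    have h1 := pow_mulVec ha q
    have h2 := pow_mulVec hb p
    rw [hrel, h2] at h1
    obtain ⟨i, hi⟩ := Function.ne_iff.mp hv
    have h3 := congrFun h1 i
    simp only [Pi.smul_apply, smul_eq_mul, Pi.zero_apply] at h3 hi
    exact (mul_right_cancel₀ hi h3).symm
  -- Bezout
  set x : ℤ := Nat.gcdA p q with hx
  set y : ℤ := Nat.gcdB p q with hy
  have hbez : (1 : ℤ) = p * x + q * y := by
    have := Nat.gcd_eq_gcd_ab p q
    rwa [hpq.gcd_eq_one] at this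
  -- units
  set au : ℂˣ := Units.mk0 a ha0 with hau'
  set bu : ℂˣ := Units.mk0 b hb0 with hbu'
  have hau : au ^ (q : ℤ) = bu ^ (p : ℤ) := by
    rw [zpow_natCast, zpow_natCast]
    ext
    push_cast [hau', hbu']
    exact haq
  set tu : ℂˣ := au ^ x * bu ^ y with htu
  have htp : tu ^ (p : ℤ) = au := by
    calc tu ^ (p:ℤ) = (au^x)^(p:ℤ) * (bu^y)^(p:ℤ) := by rw [htu, mul_zpow]
      _ = au^(x*(p:ℤ)) * bu^((p:ℤ)*y) := by
            rw [← _root_.zpow_mul, ← _root_.zpow_mul, mul_comm y]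
      _ = au^(x*(p:ℤ)) * (au^(q:ℤ))^y := by rw [_root_.zpow_mul bu, hau]
      _ = au^(x*(p:ℤ) + (q:ℤ)*y) := by rw [← _root_.zpow_mul, ← _root_.zpow_add]
      _ = au := by rw [show x*(p:ℤ) + (q:ℤ)*y = 1 by linarith [hbez], zpow_one]
  have htq : tu ^ (q : ℤ) = bu := by
    calc tu ^ (q:ℤ) = (au^x)^(q:ℤ) * (bu^y)^(q:ℤ) := by rw [htu, mul_zpow]
      _ = au^((q:ℤ)*x) * bu^(y*(q:ℤ)) := by
            rw [← _root_.zpow_mul, ← _root_.zpow_mul, mul_comm x]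
      _ = (bu^(p:ℤ))^x * bu^(y*(q:ℤ)) := by rw [_root_.zpow_mul au, hau]
      _ = bu^((p:ℤ)*x + y*(q:ℤ)) := by rw [← _root_.zpow_mul, ← _root_.zpow_add]
      _ = bu := by rw [show (p:ℤ)*x + y*(q:ℤ) = 1 by linarith [hbez], zpow_one]
  refine ⟨(tu : ℂ), tu.ne_zero, ?_, ?_, ?_⟩
  · have h1 : (tu : ℂ) ^ p = a := by
      have := congrArg (Units.val) htp
      rwa [zpow_natCast, Units.val_pow_eq_pow_val] at this
    have h2 : (tu : ℂ)⁻¹ ^ p = a⁻¹ := by rw [inv_pow, h1]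
    rw [hτA, h1, h2]
  · have h1 : (tu : ℂ) ^ q = b := by
      have := congrArg (Units.val) htq
      rwa [zpow_natCast, Units.val_pow_eq_pow_val] at this
    have h2 : (tu : ℂ)⁻¹ ^ q = b⁻¹ := by rw [inv_pow, h1]
    rw [hτB, h1, h2]
  · have h1 : (tu : ℂ) ^ (p + q) = a * b := by
      have hp1 : (tu : ℂ) ^ p = a := by
        have := congrArg (Units.val) htp
        rwa [zpow_natCast, Units.val_pow_eq_pow_val] at this
      have hq1 : (tu : ℂ) ^ q = b := by
        have := congrArg (Units.val) htq
        rwa [zpow_natCast, Units.val_pow_eq_pow_val] at this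
      rw [pow_add, hp1, hq1]
    have h2 : (tu : ℂ)⁻¹ ^ (p + q) = (a * b)⁻¹ := by rw [inv_pow, h1]
    rw [hτAB, h1, h2]

end TK

namespace TK
open Matrix Complex

lemma exp_add_inv (θ : ℝ) :
    Complex.exp ((θ:ℂ) * I) + (Complex.exp ((θ:ℂ) * I))⁻¹ = ((2 * Real.cos θ : ℝ) : ℂ) := by
  rw [← Complex.exp_neg, Complex.exp_mul_I,
    show -((θ:ℂ) * I) = (-(θ:ℂ)) * I by ring, Complex.exp_mul_I]
  push_cast [Complex.ofReal_cos]
  rw [Complex.cos_neg, Complex.sin_neg]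
  ring

lemma exp_sub_inv_ne (θ : ℝ) (h : Real.sin θ ≠ 0) :
    Complex.exp ((θ:ℂ) * I) - (Complex.exp ((θ:ℂ) * I))⁻¹ ≠ 0 := by
  rw [← Complex.exp_neg, Complex.exp_mul_I,
    show -((θ:ℂ) * I) = (-(θ:ℂ)) * I by ring, Complex.exp_mul_I, Complex.cos_neg,
    Complex.sin_neg]
  intro hc
  have : (2 : ℂ) * Complex.sin (θ:ℂ) * I = 0 := by linear_combination hc
  rcases mul_eq_zero.mp this with h1 | h1
  · rcases mul_eq_zero.mp h1 with h2 | h2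
    · norm_num at h2
    · rw [← Complex.ofReal_sin] at h2
      exact h (by exact_mod_cast h2)
  · exact Complex.I_ne_zero h1

lemma exp_pow_eq (k n : ℕ) (hn : n ≠ 0) :
    (Complex.exp (((k * Real.pi / n : ℝ) : ℂ) * I)) ^ n = (-1 : ℂ) ^ k := by
  have hn' : (n : ℂ) ≠ 0 := Nat.cast_ne_zero.mpr hn
  rw [← Complex.exp_nat_mul]
  have : (n : ℂ) * (((k * Real.pi / n : ℝ) : ℂ) * I) = (k : ℕ) * ((Real.pi : ℂ) * I) := by
    push_cast
    field_simp
  rw [this, Complex.exp_nat_mul, Complex.exp_pi_mul_I]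

lemma sin_pos_of_range {k n : ℕ} (hk1 : 1 ≤ k) (hk2 : k ≤ n - 1) (hn : 2 ≤ n) :
    Real.sin (k * Real.pi / n) ≠ 0 := by
  have h0 : (0 : ℝ) < k * Real.pi / n := by
    apply div_pos (mul_pos _ Real.pi_pos) _
    · exact_mod_cast Nat.pos_of_ne_zero (by omega)
    · exact_mod_cast Nat.pos_of_ne_zero (by omega)
  have h1 : k * Real.pi / n < Real.pi := by
    rw [div_lt_iff₀ (by exact_mod_cast Nat.pos_of_ne_zero (by omega) : (0:ℝ) < n)]
    have : (k : ℝ) < n := by exact_mod_cast (by omega : k < n)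
    nlinarith [Real.pi_pos]
  exact ne_of_gt (Real.sin_pos_of_pos_of_lt_pi h0 h1)

lemma neg_one_pow_parity {k l : ℕ} (h : k % 2 = l % 2) : (-1 : ℂ) ^ k = (-1 : ℂ) ^ l := by
  rcases Nat.even_or_odd k with he | ho
  · have : Even l := by rw [Nat.even_iff] at *; omega
    rw [he.neg_one_pow, this.neg_one_pow]
  · have : Odd l := by rw [Nat.odd_iff] at *; omega
    rw [ho.neg_one_pow, this.neg_one_pow]

lemma parity_of_neg_one_pow {k l : ℕ} (h : (-1 : ℂ) ^ k = (-1 : ℂ) ^ l) : k % 2 = l % 2 := by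
  rcases Nat.even_or_odd k with he | ho <;> rcases Nat.even_or_odd l with he' | ho'
  · rw [Nat.even_iff] at *; omega
  · rw [he.neg_one_pow, ho'.neg_one_pow] at h; norm_num at h
  · rw [ho.neg_one_pow, he'.neg_one_pow] at h; norm_num at h
  · rw [Nat.odd_iff] at *; omega

end TK

namespace TK
open Matrix

lemma exists_rep {p q : ℕ} {A B : SL2} (h : A ^ q = B ^ p) :
    ∃ ρ : PresentedGroup (torusRels p q) →* SL2,
      ρ (PresentedGroup.of 0) = A ∧ ρ (PresentedGroup.of 1) = B := by
  set f : Fin 2 → SL2 := ![A, B] with hf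
  have hrels : ∀ r ∈ torusRels p q, FreeGroup.lift f r = 1 := by
    rintro r hr
    rcases hr with rfl
    rw [_root_.map_mul, _root_.map_inv, _root_.map_pow, _root_.map_pow, FreeGroup.lift_apply_of, FreeGroup.lift_apply_of]
    simp only [hf, Matrix.cons_val_zero, Matrix.cons_val_one, Matrix.head_cons]
    rw [h, mul_inv_cancel]
  exact ⟨PresentedGroup.toGroup hrels, PresentedGroup.toGroup.of hrels,
    PresentedGroup.toGroup.of hrels⟩

lemma rep_rel {p q : ℕ} (ρ : PresentedGroup (torusRels p q) →* SL2) :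
    ρ (PresentedGroup.of 0) ^ q = ρ (PresentedGroup.of 1) ^ p := by
  have h1 : ((PresentedGroup.of 0 : PresentedGroup (torusRels p q)) ^ q *
      ((PresentedGroup.of 1 : PresentedGroup (torusRels p q)) ^ p)⁻¹) = 1 := by
    have : (PresentedGroup.mk (torusRels p q))
        (FreeGroup.of 0 ^ q * (FreeGroup.of 1 ^ p)⁻¹) = 1 := by
      apply (QuotientGroup.eq_one_iff _).mpr
      exact Subgroup.subset_normalClosure rfl
    rwa [_root_.map_mul, _root_.map_inv, _root_.map_pow, _root_.map_pow] at this
  have h2 := congrArg ρ h1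
  rw [_root_.map_mul, _root_.map_inv, _root_.map_pow, _root_.map_pow, _root_.map_one, mul_inv_eq_one] at h2
  exact h2

end TK

namespace TK
open Matrix

lemma pow_vec (a b : ℂ) (n : ℕ) : (![a, b] : Fin 2 → ℂ) ^ n = ![a ^ n, b ^ n] := by
  funext i
  fin_cases i <;> simp [Pi.pow_apply]

lemma abelian_construct {p q : ℕ} (hp : 2 ≤ p) (hq : 2 ≤ q) {t : ℂ} (ht : t ≠ 0) :
    ∃ A B : SL2, A ^ q = B ^ p ∧ (A : M2).trace = t ^ p + t⁻¹ ^ p ∧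
      (B : M2).trace = t ^ q + t⁻¹ ^ q ∧
      ((A * B : SL2) : M2).trace = t ^ (p+q) + t⁻¹ ^ (p+q) := by
  have hdet : ∀ n : ℕ, (Matrix.diagonal ![t ^ n, t⁻¹ ^ n]).det = 1 := by
    intro n
    rw [Matrix.det_diagonal, Fin.prod_univ_two]
    simp only [Matrix.cons_val_zero, Matrix.cons_val_one, Matrix.head_cons]
    rw [← mul_pow, mul_inv_cancel₀ ht, one_pow]
  refine ⟨⟨_, hdet p⟩, ⟨_, hdet q⟩, ?_, ?_, ?_, ?_⟩
  · apply Subtype.ext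
    erw [Matrix.SpecialLinearGroup.coe_pow, Matrix.SpecialLinearGroup.coe_pow]
    simp only [Matrix.SpecialLinearGroup.coe_mk]
    rw [Matrix.diagonal_pow, Matrix.diagonal_pow, pow_vec, pow_vec]
    congr 1
    rw [← pow_mul, ← pow_mul, ← pow_mul, ← pow_mul, mul_comm p q]
  · rw [Matrix.SpecialLinearGroup.coe_mk, Matrix.trace_diagonal, Fin.sum_univ_two]
    simp
  · rw [Matrix.SpecialLinearGroup.coe_mk, Matrix.trace_diagonal, Fin.sum_univ_two]
    simp
  · erw [Matrix.SpecialLinearGroup.coe_mul]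
    simp only [Matrix.SpecialLinearGroup.coe_mk]
    rw [Matrix.diagonal_mul_diagonal, Matrix.trace_diagonal, Fin.sum_univ_two]
    simp only [Pi.mul_apply, Matrix.cons_val_zero, Matrix.cons_val_one, Matrix.head_cons]
    rw [← pow_add, ← pow_add]

end TK

namespace TK
open Matrix Complex

lemma smul_one_eq_diagonal (ε : ℂ) : ε • (1 : M2) = Matrix.diagonal (fun _ => ε) := by
  ext i j
  rcases eq_or_ne i j with rfl | hne
  · simp [Matrix.one_apply]
  · simp [Matrix.one_apply_ne hne, Matrix.diagonal_apply_ne _ hne]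

lemma irred_construct {p q : ℕ} (hp : 2 ≤ p) (hq : 2 ≤ q) {k l : ℕ}
    (hk1 : 1 ≤ k) (hk2 : k ≤ q - 1) (hl1 : 1 ≤ l) (hl2 : l ≤ p - 1) (hpar : k % 2 = l % 2)
    (z : ℂ) :
    ∃ A B : SL2, A ^ q = B ^ p ∧
      (A : M2).trace = ((2 * Real.cos (k * Real.pi / q) : ℝ) : ℂ) ∧
      (B : M2).trace = ((2 * Real.cos (l * Real.pi / p) : ℝ) : ℂ) ∧
      ((A * B : SL2) : M2).trace = z := by
  set θk : ℝ := k * Real.pi / q with hθk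
  set θl : ℝ := l * Real.pi / p with hθl
  set α : ℂ := Complex.exp ((θk : ℂ) * I) with hα
  set β : ℂ := Complex.exp ((θl : ℂ) * I) with hβ
  have hα0 : α ≠ 0 := Complex.exp_ne_zero _
  have hβ0 : β ≠ 0 := Complex.exp_ne_zero _
  have hsumα : α + α⁻¹ = ((2 * Real.cos θk : ℝ) : ℂ) := exp_add_inv θk
  have hsumβ : β + β⁻¹ = ((2 * Real.cos θl : ℝ) : ℂ) := exp_add_inv θl
  have hdiffα : α - α⁻¹ ≠ 0 := exp_sub_inv_ne θk (sin_pos_of_range hk1 hk2 hq)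
  have hdiffβ : β - β⁻¹ ≠ 0 := exp_sub_inv_ne θl (sin_pos_of_range hl1 hl2 hp)
  have hαq : α ^ q = (-1 : ℂ) ^ k := exp_pow_eq k q (by omega)
  have hβp : β ^ p = (-1 : ℂ) ^ l := exp_pow_eq l p (by omega)
  set ε : ℂ := (-1 : ℂ) ^ k with hε
  have hε2 : ε * ε = 1 := by
    rw [hε, ← mul_pow]; norm_num
  have hεinv : ε⁻¹ = ε := inv_eq_of_mul_eq_one_right hε2
  set τ : ℂ := β + β⁻¹ with hτ
  set b11 : ℂ := (z - α⁻¹ * τ) / (α - α⁻¹) with hb11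
  set b22 : ℂ := τ - b11 with hb22
  have hdetA : (Matrix.diagonal ![α, α⁻¹]).det = 1 := by
    rw [Matrix.det_diagonal, Fin.prod_univ_two]
    simp only [Matrix.cons_val_zero, Matrix.cons_val_one, Matrix.head_cons]
    exact mul_inv_cancel₀ hα0
  have hdetB : (!![b11, 1; b11 * b22 - 1, b22] : M2).det = 1 := by
    rw [Matrix.det_fin_two_of]; ring
  refine ⟨⟨_, hdetA⟩, ⟨_, hdetB⟩, ?_, ?_, ?_, ?_⟩
  · apply Subtype.ext
    erw [Matrix.SpecialLinearGroup.coe_pow, Matrix.SpecialLinearGroup.coe_pow]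
    simp only [Matrix.SpecialLinearGroup.coe_mk]
    have h1 : (Matrix.diagonal ![α, α⁻¹]) ^ q = ε • 1 := by
      rw [Matrix.diagonal_pow, pow_vec, inv_pow, hαq, hεinv, smul_one_eq_diagonal]
      congr 1
      funext i
      fin_cases i <;> rfl
    have h2 : (!![b11, 1; b11 * b22 - 1, b22] : M2) ^ p = ε • 1 := by
      apply pow_eq_scalar _ hdetB β ε hβ0 hdiffβ _ (by omega) _ hε2
      · rw [Matrix.trace_fin_two_of, hb22, hτ]; ring
      · rw [hβp, hε]; exact (neg_one_pow_parity hpar).symm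
    rw [h1, h2]
  · rw [Matrix.SpecialLinearGroup.coe_mk, Matrix.trace_diagonal, Fin.sum_univ_two]
    simp only [Matrix.cons_val_zero, Matrix.cons_val_one, Matrix.head_cons]
    rw [hsumα]
  · rw [Matrix.SpecialLinearGroup.coe_mk, Matrix.trace_fin_two_of, hb22,
      show b11 + (τ - b11) = τ by ring]
    exact hsumβ
  · erw [Matrix.SpecialLinearGroup.coe_mul]
    simp only [Matrix.SpecialLinearGroup.coe_mk]
    rw [Matrix.trace_fin_two, Matrix.mul_apply, Matrix.mul_apply, Fin.sum_univ_two]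
    simp only [Matrix.diagonal, Matrix.of_apply, Matrix.cons_val', Matrix.cons_val_zero,
      Matrix.cons_val_one, Matrix.head_cons, Matrix.head_fin_const, Matrix.empty_val',
      Matrix.cons_val_fin_one]
    norm_num
    have hkey : (α - α⁻¹) * b11 = z - α⁻¹ * τ := by
      rw [hb11, mul_comm]; exact div_mul_cancel₀ _ hdiffα
    rw [hb22]
    linear_combination hkey
end TK


/-- For the torus knot group `G = ⟨u, v | u^q = v^p⟩` with `p, q ≥ 2` coprime,
the set of trace triples `(tr ρ(u), tr ρ(v), tr ρ(uv))` of `SL(2,ℂ)`-representations `ρ`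
of `G` is the union of the abelian part, parametrized by `t ≠ 0`, and the irreducible
part, a union of lines indexed by the admissible pairs `(k, l)`. -/
theorem stmt_7 (p q : ℕ) (hp : 2 ≤ p) (hq : 2 ≤ q) (hpq : Nat.Coprime p q) :
    {x : ℂ × ℂ × ℂ |
        ∃ ρ : PresentedGroup (torusRels p q) →* Matrix.SpecialLinearGroup (Fin 2) ℂ,
          x = (Matrix.trace (ρ (PresentedGroup.of 0)).1,
               Matrix.trace (ρ (PresentedGroup.of 1)).1,
               Matrix.trace (ρ (PresentedGroup.of 0 * PresentedGroup.of 1)).1)} =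
    {x : ℂ × ℂ × ℂ | ∃ t : ℂ, t ≠ 0 ∧
        x = (t ^ p + t⁻¹ ^ p, t ^ q + t⁻¹ ^ q, t ^ (p + q) + t⁻¹ ^ (p + q))} ∪
    {x : ℂ × ℂ × ℂ | ∃ k l : ℕ, 1 ≤ k ∧ k ≤ q - 1 ∧ 1 ≤ l ∧ l ≤ p - 1 ∧ k % 2 = l % 2 ∧
        ∃ z : ℂ, x = (((2 * Real.cos (k * Real.pi / q) : ℝ) : ℂ),
                      ((2 * Real.cos (l * Real.pi / p) : ℝ) : ℂ), z)} := by
  ext x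
  simp only [Set.mem_setOf_eq, Set.mem_union]
  constructor
  · rintro ⟨ρ, hx⟩
    set A := ρ (PresentedGroup.of 0) with hA
    set B := ρ (PresentedGroup.of 1) with hB
    have hrelSL : A ^ q = B ^ p := TK.rep_rel ρ
    have hrel : (A : TK.M2) ^ q = (B : TK.M2) ^ p := by
      rw [← Matrix.SpecialLinearGroup.coe_pow, ← Matrix.SpecialLinearGroup.coe_pow, hrelSL]
    have hdA : ((A : TK.M2)).det = 1 := A.2
    have hdB : ((B : TK.M2)).det = 1 := B.2
    have hAB : (ρ (PresentedGroup.of 0 * PresentedGroup.of 1)) = A * B := by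
      rw [_root_.map_mul]
    by_cases hce : ∃ v : Fin 2 → ℂ, v ≠ 0 ∧ (∃ a : ℂ, (A : TK.M2).mulVec v = a • v) ∧
        (∃ b : ℂ, (B : TK.M2).mulVec v = b • v)
    · left
      obtain ⟨v, hv, ⟨a, ha⟩, ⟨b, hb⟩⟩ := hce
      obtain ⟨t, ht, h1, h2, h3⟩ := TK.abelian_case hdA hdB hp hq hpq hrel hv ha hb
      refine ⟨t, ht, ?_⟩
      rw [hx, hAB, Prod.mk.injEq, Prod.mk.injEq]
      refine ⟨h1, h2, ?_⟩
      rw [← h3, Matrix.SpecialLinearGroup.coe_mul]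
    · right
      have hCA : (A : TK.M2) ^ q * (A : TK.M2) = (A : TK.M2) * (A : TK.M2) ^ q := by
        rw [← pow_succ, ← pow_succ']
      have hCB : (A : TK.M2) ^ q * (B : TK.M2) = (B : TK.M2) * (A : TK.M2) ^ q := by
        rw [hrel, ← pow_succ, ← pow_succ']
      have hdetC : ((A : TK.M2) ^ q).det = 1 := by rw [Matrix.det_pow, hdA, one_pow]
      obtain ⟨ε, hε2, hC⟩ := TK.comm_scalar hdetC hCA hCB hce
      have hApow : (A : TK.M2) ^ q = ε • 1 := hC
      have hBpow : (B : TK.M2) ^ p = ε • 1 := by rw [← hrel]; exact hC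
      have hscA : ∀ c : ℂ, (A : TK.M2) ≠ c • 1 := by
        intro c hc
        apply hce
        obtain ⟨b, v, hv, hbv⟩ := TK.exists_eigen (B : TK.M2) hdB
        exact ⟨v, hv, ⟨c, by rw [hc, Matrix.smul_mulVec, Matrix.one_mulVec]⟩, ⟨b, hbv⟩⟩
      have hscB : ∀ c : ℂ, (B : TK.M2) ≠ c • 1 := by
        intro c hc
        apply hce
        obtain ⟨a, v, hv, hav⟩ := TK.exists_eigen (A : TK.M2) hdA
        exact ⟨v, hv, ⟨a, hav⟩, ⟨c, by rw [hc, Matrix.smul_mulVec, Matrix.one_mulVec]⟩⟩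
      obtain ⟨k, hk1, hk2, hkτ, hkε⟩ := TK.trace_form hdA hq hε2 hApow hscA
      obtain ⟨l, hl1, hl2, hlτ, hlε⟩ := TK.trace_form hdB hp hε2 hBpow hscB
      refine ⟨k, l, hk1, hk2, hl1, hl2, TK.parity_of_neg_one_pow (by rw [hkε, hlε]),
        Matrix.trace (ρ (PresentedGroup.of 0 * PresentedGroup.of 1)).1, ?_⟩
      rw [hx, Prod.mk.injEq, Prod.mk.injEq]
      exact ⟨hkτ, hlτ, rfl⟩
  · rintro (⟨t, ht, hx⟩ | ⟨k, l, hk1, hk2, hl1, hl2, hpar, z, hx⟩)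
    · obtain ⟨A, B, hrel, h1, h2, h3⟩ := TK.abelian_construct hp hq ht
      obtain ⟨ρ, hρ0, hρ1⟩ := TK.exists_rep hrel
      refine ⟨ρ, ?_⟩
      rw [hx, _root_.map_mul, hρ0, hρ1, Prod.mk.injEq, Prod.mk.injEq]
      exact ⟨h1.symm, h2.symm, h3.symm⟩
    · obtain ⟨A, B, hrel, h1, h2, h3⟩ := TK.irred_construct hp hq hk1 hk2 hl1 hl2 hpar z
      obtain ⟨ρ, hρ0, hρ1⟩ := TK.exists_rep hrel
      refine ⟨ρ, ?_⟩
      rw [hx, _root_.map_mul, hρ0, hρ1, Prod.mk.injEq, Prod.mk.injEq]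
      exact ⟨h1.symm, h2.symm, h3.symm⟩
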